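/- For every θ > 0 and every x ∈ ℕ, mixing a Poisson(λ) pmf over a Lindley(θ) density yields the Poisson–Lindley pmf: ∫_0^∞ (e^{−λ} λ^x / x!) · (θ²/(θ + 1))(1 + λ)e^{−θλ} dλ = θ²(x + θ + 2)/(θ + 1)^{x+3}. -/

import Mathlib

open MeasureTheory

lemma integral_pow_mul_exp_neg_mul_Ioi' {r : ℝ} (hr : 0 < r) (n : ℕ) :
    ∫ t in Set.Ioi (0 : ℝ), t ^ n * Real.exp (-(r * t)) =
      (Nat.factorial n : ℝ) / r ^ (n + 1) := by
  have h := Real.integral_rpow_mul_exp_neg_mul_Ioi (a := (n : ℝ) + 1) (r := r)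
    (by positivity) hr
  rw [show ((n : ℝ) + 1 - 1) = (n : ℝ) by ring] at h
  have : ∫ t in Set.Ioi (0 : ℝ), t ^ n * Real.exp (-(r * t)) =
      ∫ t in Set.Ioi (0 : ℝ), t ^ ((n : ℝ)) * Real.exp (-(r * t)) := by
    refine setIntegral_congr_fun measurableSet_Ioi (fun t ht => ?_)
    rw [Real.rpow_natCast]
  rw [this, h, Real.Gamma_nat_eq_factorial,
    show ((n : ℝ) + 1) = ((n + 1 : ℕ) : ℝ) by push_cast; ring,
    Real.rpow_natCast, one_div, inv_pow]
  ring

lemma integrable_pow_mul_exp_neg_mul {r : ℝ} (hr : 0 < r) (n : ℕ) :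
    IntegrableOn (fun t => t ^ n * Real.exp (-(r * t))) (Set.Ioi (0 : ℝ)) := by
  have h := integrableOn_rpow_mul_exp_neg_mul_rpow (p := 1) (s := (n : ℝ)) (b := r)
    (lt_of_lt_of_le neg_one_lt_zero (Nat.cast_nonneg n)) one_pos hr
  refine h.congr_fun (fun t ht => ?_) measurableSet_Ioi
  beta_reduce
  rw [Real.rpow_one, Real.rpow_natCast, neg_mul]

theorem poisson_mixed_over_lindley (θ : ℝ) (hθ : 0 < θ) (x : ℕ) :
    ∫ l in Set.Ioi (0 : ℝ),
        (Real.exp (-l) * l ^ x / (Nat.factorial x : ℝ)) *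
          (θ ^ 2 / (θ + 1) * (1 + l) * Real.exp (-θ * l)) =
      θ ^ 2 * ((x : ℝ) + θ + 2) / (θ + 1) ^ (x + 3) := by
  have hr : (0 : ℝ) < θ + 1 := by linarith
  have hx : (0 : ℝ) < (Nat.factorial x : ℝ) := by positivity
  have key : ∀ l : ℝ,
      (Real.exp (-l) * l ^ x / (Nat.factorial x : ℝ)) *
        (θ ^ 2 / (θ + 1) * (1 + l) * Real.exp (-θ * l)) =
      (θ ^ 2 / ((θ + 1) * (Nat.factorial x : ℝ))) *
        (l ^ x * Real.exp (-((θ + 1) * l)) + l ^ (x + 1) * Real.exp (-((θ + 1) * l))) := by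
    intro l
    rw [show -((θ + 1) * l) = -l + -θ * l by ring, Real.exp_add]
    field_simp
    ring
  simp_rw [key]
  rw [integral_const_mul, integral_add (integrable_pow_mul_exp_neg_mul hr x)
    (integrable_pow_mul_exp_neg_mul hr (x + 1)),
    integral_pow_mul_exp_neg_mul_Ioi' hr x, integral_pow_mul_exp_neg_mul_Ioi' hr (x + 1)]
  rw [Nat.factorial_succ]
  push_cast
  field_simp
  ring
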